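/- arXiv:2406.14332 — 2 statements merged into one kernel-verified Lean document; each statement's English description precedes it below -/
import Mathlib

section
/- Let G be a graph, M a maximum matching of G with |M| = m, and x, x' two distinct M-uncovered vertices. Let M_{x'} = {uv ∈ M : x' adjacent to both u and v} and M_x = {uv ∈ M : x adjacent to both u and v}. Then M_x ∩ M_{x'} = ∅, all neighbours of x lie in V(M − M_{x'}), all neighbours of x' lie in V(M − M_x), d(x') ≤ 4|M_{x'}| + 2|M − M_x − M_{x'}|, and d(x) ≤ 4|M_x| + 2|M − M_x − M_{x'}|. -/
open SimpleGraph Subgraph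

lemma aug1 {V : Type*} [Fintype V] {G : SimpleGraph V}
    {M : G.Subgraph} (hM : M.IsMatching)
    (hmax : ∀ M' : G.Subgraph, M'.IsMatching → M'.edgeSet.ncard ≤ M.edgeSet.ncard)
    {x y : V} (hx : x ∉ M.verts) (hy : y ∉ M.verts) (hadj : G.Adj x y) : False := by
  have hmatch : (M ⊔ G.subgraphOfAdj hadj).IsMatching := by
    apply hM.sup (SimpleGraph.Subgraph.IsMatching.subgraphOfAdj hadj)
    rw [hM.support_eq_verts, SimpleGraph.support_subgraphOfAdj]
    rw [Set.disjoint_left]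
    rintro a ha (rfl | rfl)
    · exact hx ha
    · exact hy ha
  have he : s(x, y) ∉ M.edgeSet := fun h =>
    hx (M.mem_verts_of_mem_edge h (Sym2.mem_mk_left x y))
  have hedge : (M ⊔ G.subgraphOfAdj hadj).edgeSet = insert s(x,y) M.edgeSet := by
    rw [SimpleGraph.Subgraph.edgeSet_sup, SimpleGraph.edgeSet_subgraphOfAdj,
      Set.union_singleton]
  have hcard := hmax _ hmatch
  rw [hedge, Set.ncard_insert_of_notMem he (Set.toFinite _)] at hcard
  omega

lemma aug3 {V : Type*} [Fintype V] {G : SimpleGraph V}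
    {M : G.Subgraph} (hM : M.IsMatching)
    (hmax : ∀ M' : G.Subgraph, M'.IsMatching → M'.edgeSet.ncard ≤ M.edgeSet.ncard)
    {x x' u v : V} (hx : x ∉ M.verts) (hx' : x' ∉ M.verts) (hne : x ≠ x')
    (huv : M.Adj u v) (hxu : G.Adj x u) (hx'v : G.Adj x' v) : False := by
  have hune : u ≠ v := (M.adj_sub huv).ne
  have hu : u ∈ M.verts := M.edge_vert huv
  have hv : v ∈ M.verts := M.edge_vert huv.symm
  set N := M.deleteVerts {u, v} with hN
  have hNm : N.IsMatching := by
    intro w hw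
    rw [hN, SimpleGraph.Subgraph.deleteVerts_verts] at hw
    obtain ⟨hwM, hwuv⟩ := hw
    simp only [Set.mem_insert_iff, Set.mem_singleton_iff, not_or] at hwuv
    obtain ⟨hwu, hwv⟩ := hwuv
    obtain ⟨w', hww', huniq⟩ := hM hwM
    have hw'M : w' ∈ M.verts := M.edge_vert hww'.symm
    have hw'u : w' ≠ u := by
      rintro rfl
      exact hwv ((hM hu).unique hww'.symm huv)
    have hw'v : w' ≠ v := by
      rintro rfl
      exact hwu ((hM hv).unique hww'.symm huv.symm)
    refine ⟨w', ?_, ?_⟩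
    · simp only [hN, SimpleGraph.Subgraph.deleteVerts_adj, Set.mem_insert_iff,
        Set.mem_singleton_iff, not_or]
      exact ⟨hwM, ⟨hwu, hwv⟩, hw'M, ⟨hw'u, hw'v⟩, hww'⟩
    · intro z hz
      simp only [hN, SimpleGraph.Subgraph.deleteVerts_adj] at hz
      exact huniq z hz.2.2.2.2
  have hNedge : N.edgeSet = M.edgeSet \ {s(u,v)} := by
    apply Set.ext
    intro e
    induction e using Sym2.ind with
    | _ a b =>
      simp only [SimpleGraph.Subgraph.mem_edgeSet, hN,
        SimpleGraph.Subgraph.deleteVerts_adj, Set.mem_diff, Set.mem_insert_iff,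
        Set.mem_singleton_iff, not_or, Sym2.eq, Sym2.rel_iff', Prod.mk.injEq,
        Prod.swap_prod_mk]
      constructor
      · rintro ⟨-, ⟨hau, hav⟩, -, ⟨hbu, hbv⟩, hab⟩
        exact ⟨hab, fun ⟨h1, _⟩ => hau h1, fun ⟨h1, _⟩ => hav h1⟩
      · rintro ⟨hab, hn1, hn2⟩
        have hau : a ≠ u := fun h => hn1 ⟨h, (hM hu).unique (h ▸ hab) huv⟩
        have hav : a ≠ v := fun h => hn2 ⟨h, (hM hv).unique (h ▸ hab) huv.symm⟩
        have hbu : b ≠ u := fun h => hn2 ⟨(hM hu).unique (h ▸ hab.symm) huv, h⟩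
        have hbv : b ≠ v := fun h => hn1 ⟨(hM hv).unique (h ▸ hab.symm) huv.symm, h⟩
        exact ⟨M.edge_vert hab, ⟨hau, hav⟩, M.edge_vert hab.symm, ⟨hbu, hbv⟩, hab⟩
  have hxv : x ≠ v := fun h => hx (h ▸ hv)
  have hxu' : x ≠ u := hxu.ne
  have hx'u : x' ≠ u := fun h => hx' (h ▸ hu)
  have hx'v' : x' ≠ v := hx'v.ne
  have hNverts : N.verts = M.verts \ {u, v} := SimpleGraph.Subgraph.deleteVerts_verts
  have hm1 : (N ⊔ G.subgraphOfAdj hxu).IsMatching := by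
    apply hNm.sup (SimpleGraph.Subgraph.IsMatching.subgraphOfAdj hxu)
    rw [hNm.support_eq_verts, SimpleGraph.support_subgraphOfAdj, hNverts,
      Set.disjoint_left]
    rintro a ⟨haM, hauv⟩ (rfl | rfl)
    · exact hx haM
    · exact hauv (by simp)
  have hm2 : (N ⊔ G.subgraphOfAdj hxu ⊔ G.subgraphOfAdj hx'v).IsMatching := by
    apply hm1.sup (SimpleGraph.Subgraph.IsMatching.subgraphOfAdj hx'v)
    rw [hm1.support_eq_verts, SimpleGraph.support_subgraphOfAdj,
      SimpleGraph.Subgraph.verts_sup, hNverts, SimpleGraph.subgraphOfAdj_verts,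
      Set.disjoint_left]
    rintro a (⟨haM, hauv⟩ | ha) (rfl | rfl)
    · exact hx' haM
    · exact hauv (by simp)
    · simp only [Set.mem_insert_iff, Set.mem_singleton_iff] at ha
      rcases ha with rfl | rfl
      · exact hne rfl
      · exact hx'u rfl
    · simp only [Set.mem_insert_iff, Set.mem_singleton_iff] at ha
      rcases ha with rfl | rfl
      · exact hxv rfl
      · exact hune rfl
  have hedge : (N ⊔ G.subgraphOfAdj hxu ⊔ G.subgraphOfAdj hx'v).edgeSet
      = insert s(x',v) (insert s(x,u) (M.edgeSet \ {s(u,v)})) := by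
    rw [SimpleGraph.Subgraph.edgeSet_sup, SimpleGraph.Subgraph.edgeSet_sup,
      hNedge, SimpleGraph.edgeSet_subgraphOfAdj, SimpleGraph.edgeSet_subgraphOfAdj,
      Set.union_singleton, Set.union_singleton]
  have h1 : s(x,u) ∉ M.edgeSet \ {s(u,v)} := fun h =>
    hx (M.mem_verts_of_mem_edge h.1 (Sym2.mem_mk_left x u))
  have h2 : s(x',v) ∉ insert s(x,u) (M.edgeSet \ {s(u,v)}) := by
    intro hmem
    rcases Set.mem_insert_iff.mp hmem with h | h
    · rw [Sym2.eq, Sym2.rel_iff', Prod.mk.injEq, Prod.swap_prod_mk, Prod.mk.injEq] at h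
      rcases h with ⟨h1, -⟩ | ⟨h1, -⟩
      · exact hne h1.symm
      · exact hx'u h1
    · exact hx' (M.mem_verts_of_mem_edge h.1 (Sym2.mem_mk_left x' v))
  have hcard := hmax _ hm2
  rw [hedge, Set.ncard_insert_of_notMem h2 (Set.Finite.insert _ (Set.toFinite _)),
    Set.ncard_insert_of_notMem h1 (Set.toFinite _)] at hcard
  have hdiff : (M.edgeSet \ {s(u,v)}).ncard + 1 = M.edgeSet.ncard :=
    Set.ncard_diff_singleton_add_one huv (Set.toFinite _)
  omega

lemma count_aux {V : Type*} [Fintype V] (s : Finset V) (S : Set (Sym2 V))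
    (h : ∀ w ∈ s, ∃ e ∈ S, w ∈ e) : s.card ≤ 2 * S.ncard := by
  classical
  set f : V → Sym2 V := fun w => if h' : ∃ e ∈ S, w ∈ e then h'.choose else s(w,w) with hf
  have hmem : ∀ w ∈ s, f w ∈ S ∧ w ∈ f w := by
    intro w hw
    have h' := h w hw
    simp only [hf, dif_pos h']
    exact ⟨h'.choose_spec.1, h'.choose_spec.2⟩
  have h1 : s.card ≤ 2 * (s.image f).card := by
    apply Finset.card_le_mul_card_image
    intro e he
    clear he
    induction e using Sym2.ind with
    | _ a b =>
      calc (s.filter fun w => f w = s(a,b)).card ≤ ({a,b} : Finset V).card := by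
            apply Finset.card_le_card
            intro w hw
            rw [Finset.mem_filter] at hw
            have hw2 := (hmem w hw.1).2
            rw [hw.2] at hw2
            simpa using hw2
        _ ≤ 2 := by
            have := Finset.card_insert_le a ({b} : Finset V)
            simpa using this
  have h2 : (s.image f).card ≤ S.ncard := by
    rw [Set.ncard_eq_toFinset_card S (Set.toFinite _)]
    apply Finset.card_le_card
    intro e he
    rw [Finset.mem_image] at he
    obtain ⟨w, hw, rfl⟩ := he
    simpa using (hmem w hw).1
  omega




/-- counting facts around a maximum matching `M` and two distinct
uncovered vertices `x, x'`, with `M_x` (resp. `M_{x'}`) the matching edges with both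
endpoints adjacent to `x` (resp. `x'`). -/
theorem stmt_15 {V : Type*} [Fintype V] (G : SimpleGraph V) [DecidableRel G.Adj]
    (M : G.Subgraph) (hM : M.IsMatching) (m : ℕ) (hm : M.edgeSet.ncard = m)
    (hmax : ∀ M' : G.Subgraph, M'.IsMatching → M'.edgeSet.ncard ≤ M.edgeSet.ncard)
    (x x' : V) (hx : x ∉ M.verts) (hx' : x' ∉ M.verts) (hne : x ≠ x') :
    ({e ∈ M.edgeSet | ∀ y ∈ e, G.Adj x y} ∩ {e ∈ M.edgeSet | ∀ y ∈ e, G.Adj x' y}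
        = ∅) ∧
    (∀ w : V, G.Adj x w →
      ∃ e ∈ M.edgeSet \ {e ∈ M.edgeSet | ∀ y ∈ e, G.Adj x' y}, w ∈ e) ∧
    (∀ w : V, G.Adj x' w →
      ∃ e ∈ M.edgeSet \ {e ∈ M.edgeSet | ∀ y ∈ e, G.Adj x y}, w ∈ e) ∧
    (G.degree x' ≤ 4 * ({e ∈ M.edgeSet | ∀ y ∈ e, G.Adj x' y}).ncard +
      2 * ((M.edgeSet \ {e ∈ M.edgeSet | ∀ y ∈ e, G.Adj x y}) \
        {e ∈ M.edgeSet | ∀ y ∈ e, G.Adj x' y}).ncard) ∧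
    (G.degree x ≤ 4 * ({e ∈ M.edgeSet | ∀ y ∈ e, G.Adj x y}).ncard +
      2 * ((M.edgeSet \ {e ∈ M.edgeSet | ∀ y ∈ e, G.Adj x y}) \
        {e ∈ M.edgeSet | ∀ y ∈ e, G.Adj x' y}).ncard) := by
  set A : Set (Sym2 V) := {e ∈ M.edgeSet | ∀ y ∈ e, G.Adj x y} with hA
  set B : Set (Sym2 V) := {e ∈ M.edgeSet | ∀ y ∈ e, G.Adj x' y} with hB
  have part1 : A ∩ B = ∅ := by
    rw [Set.eq_empty_iff_forall_notMem]
    intro e he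
    obtain ⟨⟨heM, hallx⟩, ⟨-, hallx'⟩⟩ := he
    revert heM hallx hallx'
    induction e using Sym2.ind with
    | _ a b =>
      intro heM hallx hallx'
      exact aug3 hM hmax hx hx' hne heM (hallx a (Sym2.mem_mk_left a b))
        (hallx' b (Sym2.mem_mk_right a b))
  have part2 : ∀ w : V, G.Adj x w → ∃ e ∈ M.edgeSet \ B, w ∈ e := by
    intro w hw
    have hwM : w ∈ M.verts := by
      by_contra h
      exact aug1 hM hmax hx h hw
    obtain ⟨w', hww', -⟩ := hM hwM
    refine ⟨s(w, w'), ⟨hww', ?_⟩, Sym2.mem_mk_left w w'⟩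
    rintro ⟨-, hall⟩
    exact aug3 hM hmax hx hx' hne hww' hw (hall w' (Sym2.mem_mk_right w w'))
  have part3 : ∀ w : V, G.Adj x' w → ∃ e ∈ M.edgeSet \ A, w ∈ e := by
    intro w hw
    have hwM : w ∈ M.verts := by
      by_contra h
      exact aug1 hM hmax hx' h hw
    obtain ⟨w', hww', -⟩ := hM hwM
    refine ⟨s(w, w'), ⟨hww', ?_⟩, Sym2.mem_mk_left w w'⟩
    rintro ⟨-, hall⟩
    exact aug3 hM hmax hx' hx hne.symm hww' hw (hall w' (Sym2.mem_mk_right w w'))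
  have hAsub : A ⊆ M.edgeSet := fun e he => he.1
  have hBsub : B ⊆ M.edgeSet := fun e he => he.1
  have hAB : ∀ e, e ∈ A → e ∉ B := by
    intro e heA heB
    have : e ∈ A ∩ B := ⟨heA, heB⟩
    rw [part1] at this
    exact this
  set R : Set (Sym2 V) := (M.edgeSet \ A) \ B with hR
  have hBsub' : B ⊆ M.edgeSet \ A := fun e he => ⟨he.1, fun h => hAB e h he⟩
  have hAsub' : A ⊆ M.edgeSet \ B := fun e he => ⟨he.1, hAB e he⟩
  have hcard1 : (M.edgeSet \ A).ncard = R.ncard + B.ncard := by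
    rw [hR]
    exact (Set.ncard_diff_add_ncard_of_subset hBsub' (Set.toFinite _)).symm
  have hcard2 : (M.edgeSet \ B).ncard = ((M.edgeSet \ B) \ A).ncard + A.ncard := by
    exact (Set.ncard_diff_add_ncard_of_subset hAsub' (Set.toFinite _)).symm
  have hcomm : (M.edgeSet \ B) \ A = R := Set.diff_diff_comm
  have hdeg' : G.degree x' ≤ 2 * (M.edgeSet \ A).ncard := by
    apply count_aux
    intro w hw
    exact part3 w ((G.mem_neighborFinset x' w).mp hw)
  have hdeg : G.degree x ≤ 2 * (M.edgeSet \ B).ncard := by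
    apply count_aux
    intro w hw
    exact part2 w ((G.mem_neighborFinset x w).mp hw)
  refine ⟨part1, part2, part3, ?_, ?_⟩
  · rw [hcard1] at hdeg'
    omega
  · rw [hcard2, hcomm] at hdeg
    omega
end

section
/- Let D be a digraph, Q a closed directed trail in D, S ⊆ V(D), and s ∈ S − V(Q) with some arc between s and V(Q). If D is S-strong, then D contains either a closed directed trail Q' with |V(Q') ∩ S| > |V(Q) ∩ S|, or a directed path T from a vertex u' ∈ V(Q) to a vertex u ∈ V(Q), with u ≠ u', passing through s and satisfying V(T) ∩ V(Q) = {u', u}. -/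
/-- A directed walk: consecutive vertices are joined by arcs. -/
def IsDiwalk {V : Type*} (A : V → V → Prop) : List V → Prop
  | [] => True
  | [_] => True
  | a :: b :: l => A a b ∧ IsDiwalk A (b :: l)

/-- The list of arcs traversed by a walk given as a vertex list. -/
def arcList {V : Type*} (l : List V) : List (V × V) := l.zip l.tail

/-- A directed trail: a directed walk with no repeated arcs. -/
def IsDitrail {V : Type*} (A : V → V → Prop) (l : List V) : Prop :=
  IsDiwalk A l ∧ (arcList l).Nodup

/-- A closed directed trail: a directed trail whose first and last vertices coincide. -/
def IsClosedDitrail {V : Type*} (A : V → V → Prop) (l : List V) : Prop :=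
  IsDitrail A l ∧ l.head? = l.getLast?

/-- A directed path from `u` to `v` (no repeated vertices). -/
def IsDipathFrom {V : Type*} (A : V → V → Prop) (u v : V) (l : List V) : Prop :=
  IsDiwalk A l ∧ l.Nodup ∧ l.head? = some u ∧ l.getLast? = some v

/-- Reachability by a directed path. -/
def DiReach {V : Type*} (A : V → V → Prop) (u v : V) : Prop :=
  ∃ l, IsDipathFrom A u v l

section Helpers

variable {V : Type*} {A : V → V → Prop}

lemma isDiwalk_iff_chain' : ∀ l : List V, IsDiwalk A l ↔ l.Chain' A
  | [] => by simp [IsDiwalk, List.Chain']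
  | [a] => by simp [IsDiwalk, List.Chain']
  | a :: b :: l => by
    rw [IsDiwalk, List.Chain', List.isChain_cons_cons, isDiwalk_iff_chain' (b :: l), List.Chain']

lemma arcList_nil : arcList ([] : List V) = [] := rfl
lemma arcList_single (a : V) : arcList [a] = [] := rfl
lemma arcList_cons_cons (a b : V) (l : List V) :
    arcList (a :: b :: l) = (a, b) :: arcList (b :: l) := rfl

lemma mem_arcList_fst {p : V × V} {l : List V} (h : p ∈ arcList l) : p.1 ∈ l :=
  (List.of_mem_zip h).1

lemma mem_arcList_snd {p : V × V} {l : List V} (h : p ∈ arcList l) : p.2 ∈ l.tail :=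
  (List.of_mem_zip h).2

lemma arcList_nodup {l : List V} (h : l.Nodup) : (arcList l).Nodup := by
  have hm : (arcList l).map Prod.snd = l.tail :=
    List.map_snd_zip (by cases l <;> simp)
  exact List.Nodup.of_map Prod.snd (hm ▸ h.tail)

lemma arcList_rel : ∀ {l : List V}, IsDiwalk A l → ∀ p ∈ arcList l, A p.1 p.2
  | [], _, p, hp => by simp [arcList_nil] at hp
  | [a], _, p, hp => by simp [arcList_single] at hp
  | a :: b :: l, hw, p, hp => by
    rw [arcList_cons_cons] at hp
    rcases List.mem_cons.mp hp with h | h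
    · subst h; exact hw.1
    · exact arcList_rel hw.2 p h

lemma arcList_append_cons : ∀ (l : List V) (x : V) (m : List V),
    arcList (l ++ x :: m) = arcList (l ++ [x]) ++ arcList (x :: m)
  | [], x, m => by simp [arcList_single]
  | [a], x, m => by simp [arcList_cons_cons, arcList_single]
  | a :: b :: l, x, m => by
    have := arcList_append_cons (b :: l) x m
    simp only [List.cons_append, arcList_cons_cons] at *
    rw [this]

/-- Taking the shortest prefix of a path ending at a vertex satisfying `P`. -/
lemma exists_prefix {P : V → Prop} :
    ∀ l : List V, l.Chain' A → l.Nodup → (∃ v ∈ l, P v) →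
    ∃ R u, (R : List V).Chain' A ∧ R.Nodup ∧ R.head? = l.head? ∧ R.getLast? = some u ∧ P u ∧
      (∀ v ∈ R, P v → v = u) ∧ (∀ v ∈ R, v ∈ l)
  | [], _, _, hex => by simp at hex
  | a :: rest, hc, hn, hex => by
    by_cases ha : P a
    · exact ⟨[a], a, by simp [List.Chain'], by simp, by simp, by simp, ha,
        by simp_all, by simp⟩
    · have hex' : ∃ v ∈ rest, P v := by
        rcases hex with ⟨v, hv, hPv⟩
        rcases List.mem_cons.mp hv with rfl | hv
        · exact absurd hPv ha
        · exact ⟨v, hv, hPv⟩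
      obtain ⟨R', u, hc', hn', hh', hl', hPu, honly, hsub⟩ :=
        exists_prefix rest (hc.tail) hn.of_cons hex'
      have hRne : R' ≠ [] := by
        rcases hex' with ⟨v, hv, _⟩
        intro h; subst h
        simp at hh'
        rcases rest with _ | ⟨b, rest⟩
        · simp at hv
        · simp at hh'
      refine ⟨a :: R', u, ?_, ?_, by simp, ?_, hPu, ?_, ?_⟩
      · rw [List.Chain', List.isChain_cons]
        refine ⟨fun y hy => ?_, hc'⟩
        rw [hh'] at hy
        rcases rest with _ | ⟨b, rest⟩
        · simp at hy
        · simp at hy; subst hy; exact (List.isChain_cons_cons.mp hc).1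
      · rw [List.nodup_cons]
        exact ⟨fun h => (List.nodup_cons.mp hn).1 (hsub a h), hn'⟩
      · rw [List.getLast?_cons, hl']; rfl
      · intro v hv hPv
        rcases List.mem_cons.mp hv with rfl | hv
        · exact absurd hPv ha
        · exact honly v hv hPv
      · intro v hv
        rcases List.mem_cons.mp hv with rfl | hv
        · exact List.mem_cons_self
        · exact List.mem_cons_of_mem _ (hsub v hv)

/-- Taking the shortest suffix of a path starting at a vertex satisfying `P`. -/
lemma exists_suffix {P : V → Prop} :
    ∀ l : List V, l.Chain' A → l.Nodup → (∃ v ∈ l, P v) →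
    ∃ R u, (R : List V).Chain' A ∧ R.Nodup ∧ R.getLast? = l.getLast? ∧ R.head? = some u ∧ P u ∧
      (∀ v ∈ R, P v → v = u) ∧ (∀ v ∈ R, v ∈ l)
  | [], _, _, hex => by simp at hex
  | a :: rest, hc, hn, hex => by
    by_cases hr : ∃ v ∈ rest, P v
    · obtain ⟨R, u, hc', hn', hl', hh', hPu, honly, hsub⟩ :=
        exists_suffix rest (hc.tail) hn.of_cons hr
      have hrne : rest ≠ [] := by rcases hr with ⟨v, hv, _⟩; exact List.ne_nil_of_mem hv
      refine ⟨R, u, hc', hn', ?_, hh', hPu, honly, fun v hv => List.mem_cons_of_mem _ (hsub v hv)⟩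
      rw [hl']
      rcases rest with _ | ⟨b, rest⟩
      · exact absurd rfl hrne
      · rw [List.getLast?_cons_cons]
    · have hPa : P a := by
        rcases hex with ⟨v, hv, hPv⟩
        rcases List.mem_cons.mp hv with rfl | hv
        · exact hPv
        · exact absurd ⟨v, hv, hPv⟩ hr
      refine ⟨a :: rest, a, hc, hn, rfl, rfl, hPa, ?_, fun v hv => hv⟩
      intro v hv hPv
      rcases List.mem_cons.mp hv with rfl | hv
      · rfl
      · exact absurd ⟨v, hv, hPv⟩ hr

/-- Splicing a closed ear `E` (attached at `u`, otherwise disjoint from `Q`) into a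
closed ditrail `Q = Qa ++ u :: Qb`. -/
lemma splice (hirr : ∀ v, ¬ A v v) {Qa Qb E : List V} {u : V}
    (hQ : IsClosedDitrail A (Qa ++ u :: Qb))
    (hEc : E.Chain' A) (hEn : (arcList E).Nodup)
    (hh : E.head? = some u) (hl : E.getLast? = some u)
    (hdisj : ∀ v ∈ E, v ∈ Qa ++ u :: Qb → v = u) :
    IsClosedDitrail A (Qa ++ E ++ Qb) := by
  obtain ⟨⟨hQw, hQn⟩, hQhl⟩ := hQ
  rw [isDiwalk_iff_chain'] at hQw
  obtain ⟨E', rfl⟩ : ∃ E', E = u :: E' := by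
    rcases E with _ | ⟨a, E'⟩
    · simp at hh
    · simp at hh; subst hh; exact ⟨E', rfl⟩
  rcases E' with _ | ⟨b, E'⟩
  · simpa using ⟨⟨by rw [isDiwalk_iff_chain']; simpa using hQw, hQn⟩, hQhl⟩
  set E := u :: b :: E' with hE
  have hEne : E ≠ [] := by simp [hE]
  have hEsplit : E = E.dropLast ++ [u] := by
    conv_lhs => rw [← List.dropLast_append_getLast hEne]
    rw [List.getLast_eq_iff_getLast?_eq_some hEne |>.mpr hl]
  rw [List.Chain', List.isChain_append] at hQw
  obtain ⟨hQa, hQu, hrel⟩ := hQw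
  rw [List.isChain_cons] at hQu
  have harcQ : arcList (Qa ++ u :: Qb) = arcList (Qa ++ [u]) ++ arcList (u :: Qb) :=
    arcList_append_cons _ _ _
  have harcQ' : arcList (Qa ++ E ++ Qb)
      = arcList (Qa ++ [u]) ++ (arcList E ++ arcList (u :: Qb)) := by
    have h1 : Qa ++ E ++ Qb = Qa ++ u :: (b :: E' ++ Qb) := by simp [hE]
    rw [h1, arcList_append_cons]
    congr 1
    have h2 : (u :: (b :: E' ++ Qb)) = E.dropLast ++ u :: Qb := by
      conv_lhs => rw [show u :: (b :: E' ++ Qb) = E ++ Qb by simp [hE]]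
      conv_lhs => rw [hEsplit]
      simp
    rw [h2, arcList_append_cons, ← hEsplit]
  have hsub1 : ∀ v : V, v ∈ Qa ++ [u] → v ∈ Qa ++ u :: Qb := by
    intro v hv
    rw [List.mem_append] at hv ⊢
    rcases hv with hv | hv
    · exact Or.inl hv
    · simp at hv; subst hv; exact Or.inr List.mem_cons_self
  have hsub2 : ∀ v : V, v ∈ u :: Qb → v ∈ Qa ++ u :: Qb := by
    intro v hv
    rw [List.mem_append]; exact Or.inr hv
  have hQmem : ∀ p : V × V, p ∈ arcList (Qa ++ [u]) ∨ p ∈ arcList (u :: Qb) →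
      p.1 ∈ Qa ++ u :: Qb ∧ p.2 ∈ Qa ++ u :: Qb := by
    intro p hp
    rcases hp with hp | hp
    · exact ⟨hsub1 _ (mem_arcList_fst hp),
        hsub1 _ (List.mem_of_mem_tail (mem_arcList_snd hp))⟩
    · exact ⟨hsub2 _ (mem_arcList_fst hp),
        hsub2 _ (List.mem_of_mem_tail (mem_arcList_snd hp))⟩
  have hEarc_notQ : ∀ p ∈ arcList E, p ∉ arcList (Qa ++ [u]) ∧ p ∉ arcList (u :: Qb) := by
    intro p hpE
    have h1 : p.1 ∈ E := mem_arcList_fst hpE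
    have h2 : p.2 ∈ E := List.mem_of_mem_tail (mem_arcList_snd hpE)
    have hrelp : A p.1 p.2 := arcList_rel (by rw [isDiwalk_iff_chain']; exact hEc) p hpE
    constructor <;> intro hpQ
    · obtain ⟨m1, m2⟩ := hQmem p (Or.inl hpQ)
      rw [hdisj _ h1 m1, hdisj _ h2 m2] at hrelp
      exact hirr u hrelp
    · obtain ⟨m1, m2⟩ := hQmem p (Or.inr hpQ)
      rw [hdisj _ h1 m1, hdisj _ h2 m2] at hrelp
      exact hirr u hrelp
  rw [harcQ] at hQn
  rw [List.nodup_append] at hQn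
  obtain ⟨hn1, hn2, hdis12⟩ := hQn
  refine ⟨⟨?_, ?_⟩, ?_⟩
  · rw [isDiwalk_iff_chain', List.append_assoc, List.Chain', List.isChain_append]
    refine ⟨hQa, ?_, ?_⟩
    · rw [List.isChain_append]
      refine ⟨hEc, hQu.2, ?_⟩
      intro x hx y hy
      rw [hl] at hx
      simp only [Option.mem_def, Option.some_inj] at hx
      subst hx
      exact hQu.1 y hy
    · intro x hx y hy
      rw [List.head?_append, hh] at hy
      simp only [Option.or, Option.mem_def, Option.some_inj] at hy
      subst hy
      exact hrel x hx u (by simp)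
  · rw [harcQ', List.nodup_append]
    refine ⟨hn1, ?_, ?_⟩
    · rw [List.nodup_append]
      exact ⟨hEn, hn2, fun p hp q hq hpq => (hEarc_notQ p hp).2 (hpq ▸ hq)⟩
    · intro p hp q hq hpq
      subst hpq
      revert hq
      rw [List.mem_append]
      rintro (hpE | hpQ2)
      · exact (hEarc_notQ p hpE).1 hp
      · exact hdis12 _ hp _ hpQ2 rfl
  · have hhd : (Qa ++ E ++ Qb).head? = (Qa ++ u :: Qb).head? := by
      rw [List.append_assoc, List.head?_append, List.head?_append (l := Qa)]
      congr 1
    have hlast : (Qa ++ E ++ Qb).getLast? = (Qa ++ u :: Qb).getLast? := by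
      rw [List.append_assoc, List.getLast?_append, List.getLast?_append (l := Qa)]
      congr 1
      rw [List.getLast?_append, hl]
      rcases Qb with _ | ⟨c, Qb⟩
      · simp
      · rw [List.getLast?_cons_cons, List.getLast?_eq_getLast (l := c :: Qb) (by simp)]
        rfl
    rw [hhd, hlast]; exact hQhl

/-- Strict increase of the `S`-count. -/
lemma count_lt {S : Set V} {Q Q' : List V} (hss : ∀ v ∈ Q, v ∈ Q') {s : V}
    (hs : s ∈ S) (hsQ : s ∉ Q) (hsQ' : s ∈ Q') :
    {v | v ∈ S ∧ v ∈ Q}.ncard < {v | v ∈ S ∧ v ∈ Q'}.ncard := by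
  apply Set.ncard_lt_ncard
  · constructor
    · rintro v ⟨h1, h2⟩; exact ⟨h1, hss v h2⟩
    · intro hsub
      exact hsQ (hsub ⟨hs, hsQ'⟩).2
  · exact Set.Finite.subset (Q'.finite_toSet) (fun v hv => hv.2)

end Helpers

/-- extending a closed ditrail using an outside vertex `s ∈ S` with an
arc to/from the trail: either a closed ditrail meeting `S` more, or an attaching
dipath between two distinct trail vertices through `s`. -/
theorem stmt_17 {V : Type*} [Fintype V] (A : V → V → Prop) (hirr : ∀ v, ¬ A v v)
    (S : Set V) (Q : List V) (s : V)
    (hQ : IsClosedDitrail A Q) (hs : s ∈ S) (hsQ : s ∉ Q)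
    (harc : ∃ w ∈ Q, A s w ∨ A w s)
    (hstrong : ∀ u ∈ S, ∀ v ∈ S, u ≠ v → DiReach A u v) :
    (∃ Q' : List V, IsClosedDitrail A Q' ∧
      {v | v ∈ S ∧ v ∈ Q}.ncard < {v | v ∈ S ∧ v ∈ Q'}.ncard) ∨
    (∃ (u' u : V) (P : List V), u' ∈ Q ∧ u ∈ Q ∧ u ≠ u' ∧
      IsDipathFrom A u' u P ∧ s ∈ P ∧
      ∀ w ∈ P, w ∈ Q → w = u' ∨ w = u) := by
  classical
  obtain ⟨w, hwQ, hws⟩ := harc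
  by_cases hSQ : ∃ t ∈ Q, t ∈ S
  swap
  · -- no vertex of S on Q: the one-vertex closed trail [s] already beats Q
    left
    refine ⟨[s], ⟨⟨by rw [isDiwalk_iff_chain']; simp [List.Chain'], by simp [arcList_single]⟩, rfl⟩, ?_⟩
    have h1 : {v | v ∈ S ∧ v ∈ Q} = ∅ := by
      ext v; simp only [Set.mem_setOf_eq, Set.mem_empty_iff_false, iff_false, not_and]
      intro hv hvQ
      exact hSQ ⟨v, hvQ, hv⟩
    have h2 : {v | v ∈ S ∧ v ∈ [s]} = {s} := by
      ext v
      simp only [Set.mem_setOf_eq, List.mem_singleton, Set.mem_singleton_iff]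
      constructor
      · rintro ⟨_, rfl⟩; rfl
      · rintro rfl; exact ⟨hs, rfl⟩
    rw [h1, h2]
    simp
  · obtain ⟨t, htQ, htS⟩ := hSQ
    have hts : t ≠ s := fun h => hsQ (h ▸ htQ)
    rcases hws with hsw | hws
    · -- an arc s → w : use a path from t to s, take its suffix from its last Q-vertex
      obtain ⟨l, hlw, hln, hlh, hll⟩ := hstrong t htS s hs hts
      rw [isDiwalk_iff_chain'] at hlw
      obtain ⟨R, u', hRc, hRn, hRl, hRh, hu'Q, honly, -⟩ :=
        exists_suffix (P := fun v => v ∈ Q) l hlw hln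
          ⟨t, List.mem_of_mem_head? (by rw [hlh]; rfl), htQ⟩
      rw [hll] at hRl
      have hsu' : s ≠ u' := fun h => hsQ (h ▸ hu'Q)
      have hsR : s ∈ R := List.mem_of_getLast? hRl
      obtain ⟨rest, rfl⟩ : ∃ rest, R = u' :: rest := by
        rcases R with _ | ⟨a, rest⟩
        · simp at hRh
        · simp at hRh; subst hRh; exact ⟨rest, rfl⟩
      by_cases hwu : w = u'
      · -- the ear R ++ [w] closes back at u' = w : splice it into Q
        subst hwu
        left
        obtain ⟨Qa, Qb, hQeq⟩ := List.append_of_mem hwQ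
        subst hQeq
        have hEc : (w :: rest ++ [w]).Chain' A := by
          rw [List.Chain', List.isChain_append]
          refine ⟨hRc, by simp, ?_⟩
          intro x hx y hy
          rw [hRl] at hx
          simp only [List.head?_cons, Option.mem_def, Option.some_inj] at hx hy
          subst hx; subst hy
          exact hsw
        have hRsplit : (w :: rest : List V) = (w :: rest).dropLast ++ [s] := by
          conv_lhs => rw [← List.dropLast_append_getLast (l := w :: rest) (by simp)]
          rw [List.getLast_eq_iff_getLast?_eq_some (by simp) |>.mpr hRl]
        have h3 : w :: rest ++ [w] = (w :: rest).dropLast ++ s :: [w] := by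
          rw [show w :: rest ++ [w] = (w :: rest) ++ [w] from rfl]
          conv_lhs => rw [hRsplit]
          simp
        have harcE : arcList (w :: rest ++ [w])
            = arcList (w :: rest) ++ [(s, w)] := by
          rw [h3, arcList_append_cons, ← hRsplit]
          rfl
        have hEn : (arcList (w :: rest ++ [w])).Nodup := by
          rw [harcE, List.nodup_append]
          refine ⟨arcList_nodup hRn, by simp, ?_⟩
          intro p hp
          simp only [List.mem_singleton]
          intro _ hb; rw [hb]
          rintro rfl
          have : w ∈ (w :: rest).tail := by
            have := mem_arcList_snd hp
            simpa using this
          exact (List.nodup_cons.mp hRn).1 (by simpa using this)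
        have hsp := splice hirr hQ hEc hEn (by simp)
          (by rw [List.getLast?_concat])
          (by
            intro v hv hvQ
            rcases List.mem_append.mp hv with hv | hv
            · exact honly v hv hvQ
            · simpa using hv)
        refine ⟨Qa ++ (w :: rest ++ [w]) ++ Qb, hsp, ?_⟩
        refine count_lt ?_ hs hsQ ?_
        · intro v hv
          rcases List.mem_append.mp hv with hv | hv
          · exact List.mem_append.mpr (Or.inl (List.mem_append.mpr (Or.inl hv)))
          · rcases List.mem_cons.mp hv with rfl | hv
            · exact List.mem_append.mpr (Or.inl (List.mem_append.mpr (Or.inr (by simp))))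
            · exact List.mem_append.mpr (Or.inr hv)
        · exact List.mem_append.mpr (Or.inl (List.mem_append.mpr (Or.inr
            (List.mem_append.mpr (Or.inl hsR)))))
      · -- otherwise R ++ [w] is an attaching path from u' to w through s
        right
        refine ⟨u', w, (u' :: rest) ++ [w], hu'Q, hwQ, hwu, ⟨?_, ?_, ?_, ?_⟩, ?_, ?_⟩
        · rw [isDiwalk_iff_chain', List.Chain', List.isChain_append]
          refine ⟨hRc, by simp, ?_⟩
          intro x hx y hy
          rw [hRl] at hx
          simp only [List.head?_cons, Option.mem_def, Option.some_inj] at hx hy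
          subst hx; subst hy
          exact hsw
        · rw [List.nodup_append]
          refine ⟨hRn, by simp, ?_⟩
          intro v hv
          simp only [List.mem_singleton]
          intro _ hb; rw [hb]
          rintro rfl
          exact hwu (honly v hv hwQ)
        · simp
        · rw [List.getLast?_concat]
        · exact List.mem_append.mpr (Or.inl hsR)
        · intro v hv hvQ
          rcases List.mem_append.mp hv with hv | hv
          · exact Or.inl (honly v hv hvQ)
          · exact Or.inr (by simpa using hv)
    · -- an arc w → s : use a path from s to t, take its prefix to its first Q-vertex
      obtain ⟨l, hlw, hln, hlh, hll⟩ := hstrong s hs t htS (Ne.symm hts)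
      rw [isDiwalk_iff_chain'] at hlw
      obtain ⟨R, u, hRc, hRn, hRh, hRl, huQ, honly, -⟩ :=
        exists_prefix (P := fun v => v ∈ Q) l hlw hln
          ⟨t, List.mem_of_getLast? hll, htQ⟩
      rw [hlh] at hRh
      have hsu : s ≠ u := fun h => hsQ (h ▸ huQ)
      obtain ⟨rest, rfl⟩ : ∃ rest, R = s :: rest := by
        rcases R with _ | ⟨a, rest⟩
        · simp at hRh
        · simp at hRh; subst hRh; exact ⟨rest, rfl⟩
      have hrestne : rest ≠ [] := by
        rintro rfl
        simp at hRl
        exact hsu hRl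
      by_cases hwu : w = u
      · -- the ear w :: R closes back at u = w : splice it into Q
        subst hwu
        left
        obtain ⟨Qa, Qb, hQeq⟩ := List.append_of_mem hwQ
        subst hQeq
        have hEc : (w :: s :: rest).Chain' A := by
          rw [List.Chain', List.isChain_cons_cons]
          exact ⟨hws, hRc⟩
        have hEn : (arcList (w :: s :: rest)).Nodup := by
          rw [arcList_cons_cons, List.nodup_cons]
          refine ⟨?_, arcList_nodup hRn⟩
          intro hp
          have : s ∈ (s :: rest).tail := by simpa using mem_arcList_snd hp
          exact (List.nodup_cons.mp hRn).1 (by simpa using this)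
        have hsp := splice hirr hQ hEc hEn (by simp)
          (by
            rcases rest with _ | ⟨c, rest⟩
            · exact absurd rfl hrestne
            · rw [List.getLast?_cons_cons, List.getLast?_cons_cons]
              exact hRl)
          (by
            intro v hv hvQ
            rcases List.mem_cons.mp hv with rfl | hv
            · rfl
            · exact honly v hv hvQ)
        refine ⟨Qa ++ (w :: s :: rest) ++ Qb, hsp, ?_⟩
        refine count_lt ?_ hs hsQ ?_
        · intro v hv
          rcases List.mem_append.mp hv with hv | hv
          · exact List.mem_append.mpr (Or.inl (List.mem_append.mpr (Or.inl hv)))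
          · rcases List.mem_cons.mp hv with rfl | hv
            · exact List.mem_append.mpr (Or.inl (List.mem_append.mpr (Or.inr (by simp))))
            · exact List.mem_append.mpr (Or.inr hv)
        · exact List.mem_append.mpr (Or.inl (List.mem_append.mpr (Or.inr (by simp))))
      · -- otherwise w :: R is an attaching path from w to u through s
        right
        have hwR : w ∉ s :: rest := fun h => hwu (honly w h hwQ)
        refine ⟨w, u, w :: s :: rest, hwQ, huQ, fun h => hwu h.symm, ⟨?_, ?_, ?_, ?_⟩, ?_, ?_⟩
        · rw [isDiwalk_iff_chain', List.Chain', List.isChain_cons_cons]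
          exact ⟨hws, hRc⟩
        · rw [List.nodup_cons]
          exact ⟨hwR, hRn⟩
        · rfl
        · rw [List.getLast?_cons_cons]
          rcases rest with _ | ⟨c, rest⟩
          · exact absurd rfl hrestne
          · exact hRl
        · exact List.mem_cons_of_mem _ List.mem_cons_self
        · intro v hv hvQ
          rcases List.mem_cons.mp hv with rfl | hv
          · exact Or.inl rfl
          · exact Or.inr (honly v hv hvQ)
end
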